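/- The diameter of a product of stochastic matrices is at most the product of their diameters: for stochastic matrices P (n×m) and Q (m×k), d⁺(PQ) ≤ d⁺(P) d⁺(Q). -/

import Mathlib

open Finset

/-- Total variation distance between two functions viewed as pmfs on a finite set. -/
noncomputable def tv {X : Type*} [Fintype X] (p q : X → ℝ) : ℝ :=
  (1/2) * ∑ x, |p x - q x|

/-- `p` is a probability mass function on a finite set. -/
def IsPmf {X : Type*} [Fintype X] (p : X → ℝ) : Prop :=
  (∀ x, 0 ≤ p x) ∧ ∑ x, p x = 1

/-- The (upper) diameter of a stochastic matrix: the largest total variation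
distance between any two of its rows. -/
noncomputable def diam {I X : Type*} [Fintype I] [Fintype X] (P : I → X → ℝ) : ℝ :=
  ⨆ i : I, ⨆ j : I, tv (P i) (P j)

lemma tv_nonneg {X : Type*} [Fintype X] (p q : X → ℝ) : 0 ≤ tv p q := by
  unfold tv
  positivity

lemma le_diam {I X : Type*} [Fintype I] [Fintype X] (Q : I → X → ℝ) (i j : I) :
    tv (Q i) (Q j) ≤ diam Q := by
  have h1 : tv (Q i) (Q j) ≤ ⨆ j', tv (Q i) (Q j') :=
    le_ciSup (f := fun j' => tv (Q i) (Q j')) (Set.Finite.bddAbove (Set.finite_range _)) j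
  exact h1.trans (le_ciSup (Set.Finite.bddAbove
    (Set.finite_range (fun i => ⨆ j', tv (Q i) (Q j')))) i)

lemma diam_nonneg {I X : Type*} [Fintype I] [Fintype X] (Q : I → X → ℝ) : 0 ≤ diam Q := by
  rcases isEmpty_or_nonempty I with h | h
  · simp [diam, Real.iSup_of_isEmpty]
  · exact (tv_nonneg (Q h.some) (Q h.some)).trans (le_diam Q h.some h.some)

lemma key {J K : Type*} [Fintype J] [Fintype K] (Q : J → K → ℝ)
    (p q : J → ℝ) (hp : IsPmf p) (hq : IsPmf q) :
    tv (fun k => ∑ j, p j * Q j k) (fun k => ∑ j, q j * Q j k) ≤ tv p q * diam Q := by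
  set fp : J → ℝ := fun j => max (p j - q j) 0 with hfp
  set fm : J → ℝ := fun j => max (q j - p j) 0 with hfm
  have hfp0 : ∀ j, 0 ≤ fp j := fun j => le_max_right _ _
  have hfm0 : ∀ j, 0 ≤ fm j := fun j => le_max_right _ _
  have hsub : ∀ j, fp j - fm j = p j - q j := by
    intro j
    rcases le_total (p j) (q j) with h | h
    · rw [hfp, hfm]; simp only
      rw [max_eq_right (by linarith), max_eq_left (by linarith)]; ring
    · rw [hfp, hfm]; simp only
      rw [max_eq_left (by linarith), max_eq_right (by linarith)]; ring
  have habs : ∀ j, fp j + fm j = |p j - q j| := by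
    intro j
    rcases le_total (p j) (q j) with h | h
    · rw [hfp, hfm]; simp only
      rw [max_eq_right (by linarith), max_eq_left (by linarith),
        abs_of_nonpos (by linarith)]; ring
    · rw [hfp, hfm]; simp only
      rw [max_eq_left (by linarith), max_eq_right (by linarith),
        abs_of_nonneg (by linarith)]; ring
  have hsum0 : ∑ j, (p j - q j) = 0 := by
    rw [Finset.sum_sub_distrib, hp.2, hq.2]; ring
  have hpm : ∑ j, fp j = ∑ j, fm j := by
    have h1 : ∑ j, (fp j - fm j) = 0 := by
      rw [Finset.sum_congr rfl (fun j _ => hsub j)]; exact hsum0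
    rw [Finset.sum_sub_distrib] at h1
    linarith
  set t := tv p q with htdef
  have ht : t = ∑ j, fp j := by
    have h2 : ∑ j, |p j - q j| = ∑ j, (fp j + fm j) :=
      Finset.sum_congr rfl (fun j _ => (habs j).symm)
    rw [htdef]; unfold tv
    rw [h2, Finset.sum_add_distrib, ← hpm]; ring
  have ht0 : 0 ≤ t := tv_nonneg p q
  have hL : tv (fun k => ∑ j, p j * Q j k) (fun k => ∑ j, q j * Q j k)
      = (1/2) * ∑ k, |∑ j, (p j - q j) * Q j k| := by
    unfold tv
    congr 1
    apply Finset.sum_congr rfl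
    intro k _
    congr 1
    rw [← Finset.sum_sub_distrib]
    exact Finset.sum_congr rfl (fun j _ => (sub_mul _ _ _).symm)
  rcases eq_or_lt_of_le ht0 with h0 | hpos
  · -- t = 0 : then p = q
    have hsum : ∑ j, |p j - q j| = 0 := by
      have h3 : (1/2 : ℝ) * ∑ j, |p j - q j| = 0 := by
        rw [htdef] at h0; unfold tv at h0; linarith [h0]
      linarith
    have hpq : ∀ j, p j = q j := by
      intro j
      have h4 := (Finset.sum_eq_zero_iff_of_nonneg
        (fun j _ => abs_nonneg (p j - q j))).mp hsum j (Finset.mem_univ j)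
      have := abs_eq_zero.mp h4
      linarith
    rw [hL]
    have hz : ∀ k, ∑ j, (p j - q j) * Q j k = 0 :=
      fun k => Finset.sum_eq_zero (fun j _ => by rw [hpq j]; ring)
    simp only [hz, abs_zero, Finset.sum_const_zero, mul_zero]
    rw [← h0, zero_mul]
  · -- 0 < t
    set D := diam Q with hD
    have hid : ∀ k, t * (∑ j, (p j - q j) * Q j k)
        = ∑ j, ∑ j', fp j * fm j' * (Q j k - Q j' k) := by
      intro k
      have hS : ∑ j, (p j - q j) * Q j k = ∑ j, fp j * Q j k - ∑ j, fm j * Q j k := by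
        rw [← Finset.sum_sub_distrib]
        exact Finset.sum_congr rfl (fun j _ => by rw [← hsub j]; ring)
      have e0 : ∀ j j', fp j * fm j' * (Q j k - Q j' k)
          = (fp j * Q j k) * fm j' - fp j * (fm j' * Q j' k) := fun j j' => by ring
      have e1 : ∑ j, ∑ j', fp j * fm j' * (Q j k - Q j' k)
          = (∑ j, fp j * Q j k) * (∑ j', fm j') - (∑ j, fp j) * (∑ j', fm j' * Q j' k) := by
        simp_rw [e0, Finset.sum_sub_distrib, ← Finset.sum_mul_sum]
      rw [hS, e1, ht, hpm]
      ring
    have h1 : ∀ k, t * |∑ j, (p j - q j) * Q j k|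
        ≤ ∑ j, ∑ j', fp j * fm j' * |Q j k - Q j' k| := by
      intro k
      calc t * |∑ j, (p j - q j) * Q j k|
          = |t * (∑ j, (p j - q j) * Q j k)| := by rw [abs_mul, abs_of_nonneg ht0]
        _ = |∑ j, ∑ j', fp j * fm j' * (Q j k - Q j' k)| := by rw [hid k]
        _ ≤ ∑ j, ∑ j', |fp j * fm j' * (Q j k - Q j' k)| := by
            refine (Finset.abs_sum_le_sum_abs _ _).trans ?_
            exact Finset.sum_le_sum (fun j _ => Finset.abs_sum_le_sum_abs _ _)
        _ = ∑ j, ∑ j', fp j * fm j' * |Q j k - Q j' k| := by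
            refine Finset.sum_congr rfl fun j _ => Finset.sum_congr rfl fun j' _ => ?_
            rw [abs_mul, abs_mul, abs_of_nonneg (hfp0 j), abs_of_nonneg (hfm0 j')]
    have h2 : t * (∑ k, |∑ j, (p j - q j) * Q j k|)
        ≤ ∑ j, ∑ j', fp j * fm j' * (∑ k, |Q j k - Q j' k|) := by
      rw [Finset.mul_sum]
      calc ∑ k, t * |∑ j, (p j - q j) * Q j k|
          ≤ ∑ k, ∑ j, ∑ j', fp j * fm j' * |Q j k - Q j' k| :=
            Finset.sum_le_sum (fun k _ => h1 k)
        _ = ∑ j, ∑ k, ∑ j', fp j * fm j' * |Q j k - Q j' k| := Finset.sum_comm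
        _ = ∑ j, ∑ j', ∑ k, fp j * fm j' * |Q j k - Q j' k| :=
            Finset.sum_congr rfl (fun j _ => Finset.sum_comm)
        _ = ∑ j, ∑ j', fp j * fm j' * (∑ k, |Q j k - Q j' k|) := by
            simp_rw [Finset.mul_sum]
    have h3 : ∑ j, ∑ j', fp j * fm j' * (∑ k, |Q j k - Q j' k|) ≤ t * t * (2 * D) := by
      have hb : ∀ j j', fp j * fm j' * (∑ k, |Q j k - Q j' k|) ≤ fp j * fm j' * (2 * D) := by
        intro j j'
        apply mul_le_mul_of_nonneg_left _ (mul_nonneg (hfp0 j) (hfm0 j'))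
        have hd := le_diam Q j j'
        unfold tv at hd
        rw [← hD] at hd
        linarith
      calc ∑ j, ∑ j', fp j * fm j' * (∑ k, |Q j k - Q j' k|)
          ≤ ∑ j, ∑ j', fp j * fm j' * (2 * D) :=
            Finset.sum_le_sum (fun j _ => Finset.sum_le_sum (fun j' _ => hb j j'))
        _ = (∑ j, fp j) * (∑ j', fm j' * (2 * D)) := by
            simp_rw [mul_assoc, ← Finset.mul_sum, ← Finset.sum_mul]
        _ = (∑ j, fp j) * ((∑ j', fm j') * (2 * D)) := by rw [← Finset.sum_mul]
        _ = t * t * (2 * D) := by rw [← hpm, ← ht]; ring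
    have h4 : t * (∑ k, |∑ j, (p j - q j) * Q j k|) ≤ t * t * (2 * D) := h2.trans h3
    rw [hL]
    have h5 : (∑ k, |∑ j, (p j - q j) * Q j k|) ≤ t * (2 * D) := by
      have := (mul_le_mul_iff_right₀ hpos).mp (by linarith [h4] : t * (∑ k, |∑ j, (p j - q j) * Q j k|) ≤ t * (t * (2 * D)))
      exact this
    linarith

theorem stmt9 {I J K : Type*} [Fintype I] [Fintype J] [Fintype K]
    (P : I → J → ℝ) (Q : J → K → ℝ)
    (hP : ∀ i, IsPmf (P i)) (hQ : ∀ j, IsPmf (Q j)) :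
    diam (fun i k => ∑ j, P i j * Q j k) ≤ diam P * diam Q := by
  rcases isEmpty_or_nonempty I with hI | hI
  · have h1 : diam (fun i k => ∑ j, P i j * Q j k) = 0 := by
      simp [diam, Real.iSup_of_isEmpty]
    have h2 : diam P = 0 := by simp [diam, Real.iSup_of_isEmpty]
    rw [h1, h2, zero_mul]
  · unfold diam
    apply ciSup_le
    intro i
    apply ciSup_le
    intro j
    exact le_trans (key Q (P i) (P j) (hP i) (hP j))
      (mul_le_mul_of_nonneg_right (le_diam P i j) (diam_nonneg Q))
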